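/- For n ≥ 1, let R̃ₙ := {(X₁, X₂, X₃) ∈ GL(n,ℝ)³ : X₃(X₂ᵀ)⁻¹X₁ is symmetric positive definite}, viewed as a topological subspace of triples of real n×n matrices. Then R̃ₙ has exactly four connected components, distinguished by the signs of the determinants of the Xᵢ: two triples (X₁, X₂, X₃) and (Y₁, Y₂, Y₃) in R̃ₙ lie in the same connected component if and only if sign(det Xᵢ) = sign(det Yᵢ) for i = 1, 2, 3, and all four possible sign patterns occur (note sign(det X₃) is determined by sign(det X₁) and sign(det X₂) since det X₃ · det X₂⁻¹ · det X₁ > 0). -/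

import Mathlib

open Matrix Set Real

namespace Stmt16
variable {n : ℕ}

abbrev U (n : ℕ) : Set (Matrix (Fin n) (Fin n) ℝ) := {A | IsUnit A}

lemma isUnit_iff_det {A : Matrix (Fin n) (Fin n) ℝ} : IsUnit A ↔ A.det ≠ 0 := by
  rw [Matrix.isUnit_iff_isUnit_det, isUnit_iff_ne_zero]

/-- Build a `JoinedIn` from a globally continuous function. -/
lemma joinedIn_of_continuous {X : Type*} [TopologicalSpace X] {S : Set X} {A B : X}
    (f : ℝ → X) (hf : Continuous f) (h0 : f 0 = A) (h1 : f 1 = B)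
    (hm : ∀ t : ℝ, t ∈ Icc (0:ℝ) 1 → f t ∈ S) : JoinedIn S A B :=
  ⟨⟨⟨fun t => f t.1, hf.comp continuous_subtype_val⟩, h0, h1⟩, fun t => hm t.1 t.2⟩

lemma det_pos_iff_of_joined {A B : Matrix (Fin n) (Fin n) ℝ} (h : JoinedIn (U n) A B) :
    (0 < A.det ↔ 0 < B.det) := by
  obtain ⟨γ, hγ⟩ := h
  have hc : Continuous fun t : unitInterval => (γ t).det := γ.continuous.matrix_det
  have hne : ∀ t, (γ t).det ≠ 0 := fun t => isUnit_iff_det.mp (hγ t)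
  have himg : IsPreconnected ((fun t : unitInterval => (γ t).det) '' univ) :=
    (isPreconnected_univ).image _ hc.continuousOn
  have hA : A.det ∈ (fun t : unitInterval => (γ t).det) '' univ := ⟨0, mem_univ _, by beta_reduce; rw [γ.source]⟩
  have hB : B.det ∈ (fun t : unitInterval => (γ t).det) '' univ := ⟨1, mem_univ _, by beta_reduce; rw [γ.target]⟩
  have hAne : A.det ≠ 0 := by have := hne 0; rwa [γ.source] at this
  have hBne : B.det ≠ 0 := by have := hne 1; rwa [γ.target] at this
  have key : ∀ x y : ℝ, x ∈ (fun t : unitInterval => (γ t).det) '' univ →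
      y ∈ (fun t : unitInterval => (γ t).det) '' univ → x < 0 → 0 < y → False := by
    intro x y hx hy hxn hyp
    have : (0:ℝ) ∈ (fun t : unitInterval => (γ t).det) '' univ :=
      himg.Icc_subset hx hy ⟨hxn.le, hyp.le⟩
    obtain ⟨t, -, ht⟩ := this
    exact hne t ht
  constructor
  · intro hpA
    rcases hBne.lt_or_gt with hB' | hB'
    · exact absurd (key _ _ hB hA hB' hpA) not_false
    · exact hB'
  · intro hpB
    rcases hAne.lt_or_gt with hA' | hA'
    · exact absurd (key _ _ hA hB hA' hpB) not_false
    · exact hA'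


lemma e_mul_e (a b c d : Fin n) :
    Matrix.single a b (1:ℝ) * Matrix.single c d 1
      = if b = c then Matrix.single a d 1 else 0 := by
  split_ifs with h
  · subst h; rw [Matrix.single_mul_single_same, one_mul]
  · exact Matrix.single_mul_single_of_ne (h := h) ..

noncomputable def rot (i j : Fin n) (θ : ℝ) : Matrix (Fin n) (Fin n) ℝ :=
  1 + (Real.cos θ - 1) • (Matrix.single i i (1:ℝ) + Matrix.single j j 1)
    + Real.sin θ • (Matrix.single j i (1:ℝ) - Matrix.single i j 1)

lemma rot_mul_rot_neg {i j : Fin n} (hij : i ≠ j) (θ : ℝ) :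
    rot i j θ * rot i j (-θ) = 1 := by
  unfold rot
  simp only [Real.cos_neg, Real.sin_neg, smul_add, smul_sub, smul_neg, neg_neg, mul_neg, neg_mul,
    mul_add, add_mul, mul_sub, sub_mul, smul_mul_assoc, mul_smul_comm, smul_smul,
    mul_one, one_mul, e_mul_e, hij, hij.symm, if_true, if_false, ite_true, ite_false,
    smul_zero, sub_zero, zero_sub, add_zero, zero_add, neg_zero]
  match_scalars <;> nlinarith [Real.sin_sq_add_cos_sq θ]

noncomputable def rfl2 (i j : Fin n) (θ : ℝ) : Matrix (Fin n) (Fin n) ℝ :=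
  1 + (Real.cos θ - 1) • Matrix.single i i (1:ℝ) - (Real.cos θ + 1) • Matrix.single j j (1:ℝ)
    + Real.sin θ • (Matrix.single i j (1:ℝ) + Matrix.single j i 1)

lemma rfl2_mul_self {i j : Fin n} (hij : i ≠ j) (θ : ℝ) :
    rfl2 i j θ * rfl2 i j θ = 1 := by
  unfold rfl2
  simp only [smul_add, smul_sub, smul_neg, neg_neg, mul_neg, neg_mul,
    mul_add, add_mul, mul_sub, sub_mul, smul_mul_assoc, mul_smul_comm, smul_smul,
    mul_one, one_mul, e_mul_e, hij, hij.symm, if_true, if_false, ite_true, ite_false,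
    smul_zero, sub_zero, zero_sub, add_zero, zero_add, neg_zero]
  match_scalars <;> nlinarith [Real.sin_sq_add_cos_sq θ]

lemma rot_isUnit {i j : Fin n} (hij : i ≠ j) (θ : ℝ) : IsUnit (rot i j θ) :=
  ⟨⟨rot i j θ, rot i j (-θ), rot_mul_rot_neg hij θ,
    by have := rot_mul_rot_neg hij (-θ); rwa [neg_neg] at this⟩, rfl⟩

lemma rfl2_isUnit {i j : Fin n} (hij : i ≠ j) (θ : ℝ) : IsUnit (rfl2 i j θ) :=
  ⟨⟨rfl2 i j θ, rfl2 i j θ, rfl2_mul_self hij θ, rfl2_mul_self hij θ⟩, rfl⟩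

lemma rot_continuous (i j : Fin n) : Continuous fun θ => rot i j θ := by
  unfold rot
  exact (continuous_const.add (((Real.continuous_cos.sub continuous_const)).smul
    continuous_const)).add (Real.continuous_sin.smul continuous_const)

lemma rfl2_continuous (i j : Fin n) : Continuous fun θ => rfl2 i j θ := by
  unfold rfl2
  exact ((continuous_const.add (((Real.continuous_cos.sub continuous_const)).smul
    continuous_const)).sub ((Real.continuous_cos.add continuous_const).smul
    continuous_const)).add (Real.continuous_sin.smul continuous_const)

lemma rot_zero (i j : Fin n) : rot i j 0 = 1 := by
  simp [rot]

lemma rot_pi {i j : Fin n} (hij : i ≠ j) :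
    rot i j π = diagonal (fun k => if k = i ∨ k = j then (-1 : ℝ) else 1) := by
  unfold rot
  rw [Real.cos_pi, Real.sin_pi]
  ext a b
  simp only [Matrix.add_apply, Matrix.smul_apply, Matrix.one_apply, Matrix.single,
    Matrix.diagonal_apply, Matrix.of_apply, smul_eq_mul, Matrix.sub_apply, zero_smul,
    Pi.add_apply, Pi.sub_apply, Pi.smul_apply]
  by_cases hab : a = b <;> by_cases hai : i = a <;> by_cases haj : j = a <;>
    simp_all [eq_comm] <;> try ring

lemma rfl2_zero {i j : Fin n} (hij : i ≠ j) :
    rfl2 i j 0 = diagonal (fun k => if k = j then (-1 : ℝ) else 1) := by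
  unfold rfl2
  rw [Real.cos_zero, Real.sin_zero]
  ext a b
  simp only [Matrix.add_apply, Matrix.smul_apply, Matrix.one_apply, Matrix.single,
    Matrix.diagonal_apply, Matrix.of_apply, smul_eq_mul, Matrix.sub_apply, zero_smul,
    Pi.add_apply, Pi.sub_apply, Pi.smul_apply]
  by_cases hab : a = b <;> by_cases hai : i = a <;> by_cases haj : j = a <;>
    simp_all [eq_comm] <;> try ring

lemma rfl2_pi {i j : Fin n} (hij : i ≠ j) :
    rfl2 i j π = diagonal (fun k => if k = i then (-1 : ℝ) else 1) := by
  unfold rfl2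
  rw [Real.cos_pi, Real.sin_pi]
  ext a b
  simp only [Matrix.add_apply, Matrix.smul_apply, Matrix.one_apply, Matrix.single,
    Matrix.diagonal_apply, Matrix.of_apply, smul_eq_mul, Matrix.sub_apply, zero_smul,
    Pi.add_apply, Pi.sub_apply, Pi.smul_apply]
  by_cases hab : a = b <;> by_cases hai : i = a <;> by_cases haj : j = a <;>
    simp_all [eq_comm] <;> try ring


lemma isUnit_diag {d : Fin n → ℝ} (hd : ∀ k, d k ≠ 0) : IsUnit (diagonal d) := by
  rw [isUnit_iff_det, Matrix.det_diagonal]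
  exact Finset.prod_ne_zero_iff.mpr fun k _ => hd k

lemma stepA {d : Fin n → ℝ} (hd : ∀ k, d k ≠ 0) {i j : Fin n} (hij : i ≠ j)
    (hi : d i = -1) (hj : d j = -1) :
    JoinedIn (U n) (diagonal d) (diagonal fun k => if k = i ∨ k = j then 1 else d k) := by
  set d' : Fin n → ℝ := fun k => if k = i ∨ k = j then 1 else d k with hd'
  have hd'ne : ∀ k, d' k ≠ 0 := by
    intro k; by_cases h : k = i ∨ k = j <;> simp [hd', h, hd k]
  apply joinedIn_of_continuous (f := fun t => diagonal d' * rot i j (π - π * t))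
  · exact continuous_const.matrix_mul ((rot_continuous i j).comp (by fun_prop))
  · rw [mul_zero, sub_zero, rot_pi hij, Matrix.diagonal_mul_diagonal]
    ext a b
    rcases eq_or_ne a b with rfl | hab
    · simp only [Matrix.diagonal_apply_eq]
      by_cases hki : a = i <;> by_cases hkj : a = j <;> simp_all [d']
    · simp [Matrix.diagonal_apply_ne _ hab]
  · rw [mul_one, sub_self, rot_zero, mul_one]
  · intro t _
    exact (isUnit_diag hd'ne).mul (rot_isUnit hij _)

lemma stepB {d : Fin n → ℝ} (hd : ∀ k, d k ≠ 0) {i j : Fin n} (hij : i ≠ j)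
    (hi : d i = -1) (hj : d j = 1) :
    JoinedIn (U n) (diagonal d)
      (diagonal fun k => if k = i then 1 else if k = j then -1 else d k) := by
  set d' : Fin n → ℝ := fun k => if k = i ∨ k = j then 1 else d k with hd'
  have hd'ne : ∀ k, d' k ≠ 0 := by
    intro k; by_cases h : k = i ∨ k = j <;> simp [hd', h, hd k]
  apply joinedIn_of_continuous (f := fun t => diagonal d' * rfl2 i j (π - π * t))
  · exact continuous_const.matrix_mul ((rfl2_continuous i j).comp (by fun_prop))
  · rw [mul_zero, sub_zero, rfl2_pi hij, Matrix.diagonal_mul_diagonal]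
    ext a b
    rcases eq_or_ne a b with rfl | hab
    · simp only [Matrix.diagonal_apply_eq]
      by_cases hki : a = i <;> by_cases hkj : a = j <;> simp_all [d']
    · simp [Matrix.diagonal_apply_ne _ hab]
  · rw [mul_one, sub_self, rfl2_zero hij, Matrix.diagonal_mul_diagonal]
    ext a b
    rcases eq_or_ne a b with rfl | hab
    · simp only [Matrix.diagonal_apply_eq]
      by_cases hki : a = i <;> by_cases hkj : a = j <;> simp_all [d']
    · simp [Matrix.diagonal_apply_ne _ hab]
  · intro t _
    exact (isUnit_diag hd'ne).mul (rfl2_isUnit hij _)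

lemma diagPath {d : Fin n → ℝ} (hd : ∀ k, d k ≠ 0) :
    JoinedIn (U n) (diagonal d) (diagonal fun k => if 0 < d k then 1 else -1) := by
  apply joinedIn_of_continuous
    (f := fun t => diagonal fun k => (1 - t) * d k + t * (if 0 < d k then 1 else -1))
  · exact Continuous.matrix_diagonal (by fun_prop)
  · simp
  · simp
  · intro t ht
    apply isUnit_diag
    intro k
    rcases (hd k).lt_or_gt with hk | hk
    · have : (1 - t) * d k + t * (if 0 < d k then 1 else -1) < 0 := by
        rw [if_neg (not_lt.mpr hk.le)]
        rcases eq_or_lt_of_le ht.1 with rfl | htpos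
        · simpa using hk
        · nlinarith [ht.2]
      exact this.ne
    · have : 0 < (1 - t) * d k + t * (if 0 < d k then 1 else -1) := by
        rw [if_pos hk]
        rcases eq_or_lt_of_le ht.1 with rfl | htpos
        · simpa using hk
        · nlinarith [ht.2]
      exact this.ne'

lemma signFix (hn : 0 < n) (k : ℕ) :
    ∀ d : Fin n → ℝ, (∀ i, d i = 1 ∨ d i = -1) →
      (Finset.univ.filter fun i => d i = -1).card = k →
      JoinedIn (U n) (diagonal d)
        (if Even k then 1 else diagonal fun i : Fin n => if i = (⟨0, hn⟩ : Fin n) then -1 else 1) := by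
  induction k using Nat.strong_induction_on with
  | _ k IH =>
  intro d hd hcard
  have hdne : ∀ i, d i ≠ 0 := fun i => by rcases hd i with h|h <;> rw [h] <;> norm_num
  match k, hcard, IH with
  | 0, hcard, IH =>
    have hone : ∀ i, d i = 1 := by
      intro i
      rcases hd i with h|h
      · exact h
      · exfalso
        have hmem : i ∈ Finset.univ.filter fun i => d i = -1 := by simp [h]
        rw [Finset.card_eq_zero] at hcard
        rw [hcard] at hmem
        simp at hmem
    rw [if_pos Even.zero, show d = fun _ => 1 from funext hone,
      show (diagonal fun _ : Fin n => (1:ℝ)) = 1 from Matrix.diagonal_one]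
    exact JoinedIn.refl isUnit_one
  | 1, hcard, IH =>
    rw [if_neg (by simp)]
    obtain ⟨i, hi⟩ := Finset.card_eq_one.mp hcard
    have hdi : d i = -1 := by
      have : i ∈ Finset.univ.filter fun i => d i = -1 := hi ▸ Finset.mem_singleton_self i
      simpa using this
    have hother : ∀ j, j ≠ i → d j = 1 := by
      intro j hj
      rcases hd j with h|h
      · exact h
      · exfalso; apply hj
        have : j ∈ ({i} : Finset (Fin n)) := hi ▸ (by simp [h])
        simpa using this
    rcases eq_or_ne i (⟨0, hn⟩ : Fin n) with rfl | hii0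
    · have hfun : d = fun k => if k = (⟨0, hn⟩ : Fin n) then -1 else 1 := by
        funext k
        rcases eq_or_ne k (⟨0, hn⟩ : Fin n) with rfl|hk
        · simp [hdi]
        · simp [hk, hother k hk]
      rw [← hfun]
      exact JoinedIn.refl (isUnit_diag hdne)
    · have h0 : d (⟨0, hn⟩ : Fin n) = 1 := hother _ (Ne.symm hii0)
      have hstep := stepB hdne hii0 hdi h0
      have heq : (fun l => if l = i then (1:ℝ) else if l = (⟨0, hn⟩ : Fin n) then -1 else d l)
          = fun l => if l = (⟨0, hn⟩ : Fin n) then -1 else 1 := by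
        funext l
        rcases eq_or_ne l i with rfl|hk
        · simp [hii0]
        · rcases eq_or_ne l (⟨0, hn⟩ : Fin n) with h0|h0 <;> simp [hk, h0, hother l hk, Ne.symm hii0]
      rwa [heq] at hstep
  | (m+2), hcard, IH =>
    have h2 : 1 < (Finset.univ.filter fun i => d i = -1).card := by omega
    obtain ⟨i, hi, j, hj, hij⟩ := Finset.one_lt_card.mp h2
    have hdi : d i = -1 := by simpa using hi
    have hdj : d j = -1 := by simpa using hj
    have hstep := stepA hdne hij hdi hdj
    have hd' : ∀ l, (if l = i ∨ l = j then (1:ℝ) else d l) = 1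
        ∨ (if l = i ∨ l = j then (1:ℝ) else d l) = -1 := by
      intro l; by_cases h : l = i ∨ l = j
      · left; simp [h]
      · simpa [h] using hd l
    have hsub : ({i, j} : Finset (Fin n)) ⊆ Finset.univ.filter fun l => d l = -1 := by
      intro l hl
      simp only [Finset.mem_insert, Finset.mem_singleton] at hl
      rcases hl with rfl|rfl <;> simp [hdi, hdj]
    have hcard' : (Finset.univ.filter fun l => (if l = i ∨ l = j then (1:ℝ) else d l) = -1).card = m := by
      have hset : (Finset.univ.filter fun l => (if l = i ∨ l = j then (1:ℝ) else d l) = -1)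
          = (Finset.univ.filter fun l => d l = -1) \ ({i, j} : Finset (Fin n)) := by
        ext l
        by_cases h : l = i ∨ l = j
        · simp only [Finset.mem_filter, Finset.mem_sdiff, Finset.mem_insert,
            Finset.mem_singleton, Finset.mem_univ, true_and, if_pos h]
          constructor
          · norm_num
          · rintro ⟨-, hc⟩; exact absurd h hc
        · simp only [Finset.mem_filter, Finset.mem_sdiff, Finset.mem_insert,
            Finset.mem_singleton, Finset.mem_univ, true_and, if_neg h]
          push_neg at h
          tauto
      rw [hset, Finset.card_sdiff_of_subset hsub, hcard,
        Finset.card_insert_of_notMem (by simp [hij]), Finset.card_singleton]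
      omega
    have hIH := IH m (by omega) _ hd' hcard'
    have heven : Even (m + 2) ↔ Even m := by
      rw [show m + 2 = m + 1 + 1 from rfl]
      simp [Nat.even_add_one]
    rw [if_congr heven rfl rfl]
    exact hstep.trans hIH

def scaleT (t : ℝ) (τ : TransvectionStruct (Fin n) ℝ) : TransvectionStruct (Fin n) ℝ :=
  ⟨τ.i, τ.j, τ.hij, t * τ.c⟩

lemma cont_prod (L : List (TransvectionStruct (Fin n) ℝ)) :
    Continuous fun t => ((L.map (scaleT t)).map TransvectionStruct.toMatrix).prod := by
  induction L with
  | nil => simpa using continuous_const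
  | cons τ L ih =>
    simp only [List.map_cons, List.prod_cons]
    refine Continuous.matrix_mul ?_ ih
    have hstd : ∀ t : ℝ, (scaleT t τ).toMatrix
        = 1 + (t * τ.c) • Matrix.single τ.i τ.j (1:ℝ) := by
      intro t
      have h1 : (scaleT t τ).toMatrix = 1 + Matrix.single τ.i τ.j (t * τ.c) := rfl
      rw [h1, Matrix.smul_single, smul_eq_mul, mul_one]
    simp only [hstd]
    exact continuous_const.add ((by fun_prop : Continuous fun t : ℝ => t * τ.c).smul
      continuous_const)

lemma trans_path (A : Matrix (Fin n) (Fin n) ℝ) (hA : IsUnit A)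
    (L L' : List (TransvectionStruct (Fin n) ℝ)) :
    JoinedIn (U n) A ((L.map TransvectionStruct.toMatrix).prod * A
      * (L'.map TransvectionStruct.toMatrix).prod) := by
  apply joinedIn_of_continuous
    (f := fun t => ((L.map (scaleT t)).map TransvectionStruct.toMatrix).prod * A
      * ((L'.map (scaleT t)).map TransvectionStruct.toMatrix).prod)
  · exact ((cont_prod L).matrix_mul continuous_const).matrix_mul (cont_prod L')
  · have h0 : ∀ M : List (TransvectionStruct (Fin n) ℝ),
        ((M.map (scaleT 0)).map TransvectionStruct.toMatrix).prod = 1 := by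
      intro M
      apply List.prod_eq_one
      intro x hx
      simp only [List.map_map, List.mem_map] at hx
      obtain ⟨τ, -, rfl⟩ := hx
      show (scaleT 0 τ).toMatrix = 1
      have h1 : (scaleT 0 τ).toMatrix = transvection τ.i τ.j (0 * τ.c) := rfl
      rw [h1, zero_mul, Matrix.transvection_zero]
    rw [h0, h0, one_mul, mul_one]
  · have h1 : ∀ τ : TransvectionStruct (Fin n) ℝ, scaleT 1 τ = τ := by
      intro τ; cases τ; simp [scaleT]
    have hs : scaleT (n := n) 1 = id := funext h1
    rw [hs, List.map_id, List.map_id]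
  · intro t _
    rw [mem_setOf_eq, isUnit_iff_det, Matrix.det_mul, Matrix.det_mul,
      Matrix.TransvectionStruct.det_toMatrix_prod, Matrix.TransvectionStruct.det_toMatrix_prod,
      one_mul, mul_one]
    exact isUnit_iff_det.mp hA

lemma toDiagJoined (A : Matrix (Fin n) (Fin n) ℝ) (hA : IsUnit A) :
    ∃ d : Fin n → ℝ, (∀ i, d i ≠ 0) ∧ JoinedIn (U n) A (diagonal d) := by
  obtain ⟨L, L', d, h⟩ := Matrix.Pivot.exists_list_transvec_mul_mul_list_transvec_eq_diagonal A
  have hJ : JoinedIn (U n) A (diagonal d) := by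
    rw [← h]
    exact trans_path A hA L L'
  refine ⟨d, ?_, hJ⟩
  have hdet : (diagonal d).det ≠ 0 := by
    rw [← h]
    simp only [ne_eq, Matrix.det_mul, Matrix.TransvectionStruct.det_toMatrix_prod,
      one_mul, mul_one]
    exact isUnit_iff_det.mp hA
  rw [Matrix.det_diagonal] at hdet
  intro i hi
  exact hdet (Finset.prod_eq_zero (Finset.mem_univ i) hi)

lemma joined_canon (hn : 0 < n) (A : Matrix (Fin n) (Fin n) ℝ) (hA : IsUnit A) :
    JoinedIn (U n) A (if 0 < A.det then 1
      else diagonal fun i : Fin n => if i = (⟨0, hn⟩ : Fin n) then -1 else 1) := by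
  obtain ⟨d, hdne, h1⟩ := toDiagJoined A hA
  have h2 := diagPath hdne
  have hsgn : ∀ i, (if 0 < d i then (1:ℝ) else -1) = 1 ∨ (if 0 < d i then (1:ℝ) else -1) = -1 := by
    intro i; by_cases h : 0 < d i <;> simp [h]
  have h3 := signFix hn _ _ hsgn rfl
  have hchain := (h1.trans h2).trans h3
  have hsign := det_pos_iff_of_joined hchain
  have hdetEneg : (diagonal fun i : Fin n => if i = (⟨0, hn⟩ : Fin n) then (-1:ℝ) else 1).det = -1 := by
    rw [Matrix.det_diagonal]
    rw [Finset.prod_eq_single (⟨0, hn⟩ : Fin n) (fun b _ hb => by simp [hb]) (by simp)]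
    simp
  by_cases hpos : 0 < A.det
  · rw [if_pos hpos]
    by_cases he : Even (Finset.univ.filter fun i =>
        (if 0 < d i then (1:ℝ) else -1) = -1).card
    · rwa [if_pos he] at hchain
    · rw [if_neg he] at hsign
      rw [hdetEneg] at hsign
      norm_num at hsign
      exact absurd hpos (by simpa using hsign)
  · rw [if_neg hpos]
    by_cases he : Even (Finset.univ.filter fun i =>
        (if 0 < d i then (1:ℝ) else -1) = -1).card
    · rw [if_pos he] at hsign
      rw [Matrix.det_one] at hsign
      exact absurd (hsign.mpr one_pos) hpos
    · rwa [if_neg he] at hchain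

lemma joined_of_sign (hn : 0 < n) {A B : Matrix (Fin n) (Fin n) ℝ} (hA : IsUnit A)
    (hB : IsUnit B) (hs : 0 < A.det ↔ 0 < B.det) : JoinedIn (U n) A B := by
  have h1 := joined_canon hn A hA
  have h2 := joined_canon hn B hB
  rw [if_congr hs rfl rfl] at h1
  exact h1.trans h2.symm

lemma sign_iff_of_preconnected {s : Set ℝ} (hs : IsPreconnected s) (h0 : (0:ℝ) ∉ s)
    {a b : ℝ} (ha : a ∈ s) (hb : b ∈ s) : (0 < a ↔ 0 < b) := by
  have key : ∀ x y : ℝ, x ∈ s → y ∈ s → x < 0 → 0 < y → False := fun x y hx hy hxn hyp =>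
    h0 (hs.Icc_subset hx hy ⟨hxn.le, hyp.le⟩)
  have hane : a ≠ 0 := fun h => h0 (h ▸ ha)
  have hbne : b ≠ 0 := fun h => h0 (h ▸ hb)
  constructor
  · intro hpa
    rcases hbne.lt_or_gt with h|h
    · exact absurd (key b a hb ha h hpa) not_false
    · exact h
  · intro hpb
    rcases hane.lt_or_gt with h|h
    · exact absurd (key a b ha hb h hpb) not_false
    · exact h

lemma hermitian_smul {c : ℝ} {S : Matrix (Fin n) (Fin n) ℝ} (hS : S.IsHermitian) :
    (c • S).IsHermitian := by
  unfold Matrix.IsHermitian at *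
  rw [Matrix.conjTranspose_smul, hS, star_trivial]

lemma posDef_segment {S T : Matrix (Fin n) (Fin n) ℝ} (hS : S.PosDef) (hT : T.PosDef)
    {t : ℝ} (h0 : 0 ≤ t) (h1 : t ≤ 1) : ((1 - t) • S + t • T).PosDef := by
  refine Matrix.posDef_iff_dotProduct_mulVec.mpr ⟨?_, ?_⟩
  · exact (hermitian_smul hS.1).add (hermitian_smul hT.1)
  · intro x hx
    rw [Matrix.add_mulVec, Matrix.smul_mulVec, Matrix.smul_mulVec,
      dotProduct_add, dotProduct_smul, dotProduct_smul, smul_eq_mul, smul_eq_mul]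
    have ha := hS.dotProduct_mulVec_pos hx
    have hb := hT.dotProduct_mulVec_pos hx
    rcases le_total (star x ⬝ᵥ S *ᵥ x) (star x ⬝ᵥ T *ᵥ x) with hab|hab
    · nlinarith [mul_nonneg h0 (sub_nonneg.mpr hab)]
    · nlinarith [mul_nonneg (sub_nonneg.mpr h1) (sub_nonneg.mpr hab)]

lemma isUnit_transpose {A : Matrix (Fin n) (Fin n) ℝ} (hA : IsUnit A) : IsUnit Aᵀ := by
  rw [isUnit_iff_det, Matrix.det_transpose]
  exact isUnit_iff_det.mp hA

lemma isUnit_inv {A : Matrix (Fin n) (Fin n) ℝ} (hA : IsUnit A) : IsUnit A⁻¹ := by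
  rw [isUnit_iff_det, Matrix.det_nonsing_inv, Ring.inverse_eq_inv]
  exact inv_ne_zero (isUnit_iff_det.mp hA)

lemma continuous_inv_path {A B : Matrix (Fin n) (Fin n) ℝ} (γ : Path A B)
    (hγ : ∀ t, IsUnit (γ t)) : Continuous fun t => (γ t)⁻¹ := by
  have h : ∀ t, (γ t)⁻¹ = ((γ t).det)⁻¹ • (γ t).adjugate := by
    intro t
    rw [Matrix.inv_def, Ring.inverse_eq_inv]
  simp only [h]
  exact ((γ.continuous.matrix_det).inv₀ fun t => isUnit_iff_det.mp (hγ t)).smul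
    γ.continuous.matrix_adjugate

lemma JoinedIn.mem_cc {X : Type*} [TopologicalSpace X] {S : Set X} {a b : X}
    (h : JoinedIn S a b) : b ∈ connectedComponentIn S a := by
  obtain ⟨γ, hγ⟩ := h
  have hpre : IsPreconnected (Set.range fun t : unitInterval => γ t) :=
    isPreconnected_range γ.continuous
  have hsub : (Set.range fun t : unitInterval => γ t) ⊆ S := by rintro x ⟨t, rfl⟩; exact hγ t
  exact hpre.subset_connectedComponentIn ⟨0, γ.source⟩ hsub ⟨1, γ.target⟩

end Stmt16

open Stmt16 in
theorem stmt16 (n : ℕ) (hn : 1 ≤ n) :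
    let M := Matrix (Fin n) (Fin n) ℝ
    let Rt : Set (M × M × M) :=
      {p | IsUnit p.1 ∧ IsUnit p.2.1 ∧ IsUnit p.2.2 ∧ (p.2.2 * p.2.1ᵀ⁻¹ * p.1).PosDef}
    (∀ p ∈ Rt, ∀ q ∈ Rt,
      (q ∈ connectedComponentIn Rt p ↔
        ((0 < p.1.det ↔ 0 < q.1.det) ∧ (0 < p.2.1.det ↔ 0 < q.2.1.det) ∧
          (0 < p.2.2.det ↔ 0 < q.2.2.det)))) ∧
    (∀ b₁ b₂ : Bool, ∃ p ∈ Rt,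
      ((0 < p.1.det) ↔ b₁ = true) ∧ ((0 < p.2.1.det) ↔ b₂ = true)) := by
  intro M Rt
  have hn0 : 0 < n := hn
  constructor
  · intro p hp q hq
    obtain ⟨hp1, hp2, hp3, hpD⟩ := hp
    obtain ⟨hq1, hq2, hq3, hqD⟩ := hq
    have hpRt : p ∈ Rt := ⟨hp1, hp2, hp3, hpD⟩
    constructor
    · intro hcc
      have key : ∀ g : (M × M × M) → M, Continuous g → (∀ x ∈ Rt, IsUnit (g x)) →
          (0 < (g p).det ↔ 0 < (g q).det) := by
        intro g hgc hgu
        apply sign_iff_of_preconnected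
          (s := (fun x => (g x).det) '' connectedComponentIn Rt p)
        · exact (isPreconnected_connectedComponentIn).image _ (hgc.matrix_det).continuousOn
        · rintro ⟨x, hxC, hx0⟩
          exact isUnit_iff_det.mp (hgu x (connectedComponentIn_subset Rt p hxC)) hx0
        · exact mem_image_of_mem _ (mem_connectedComponentIn hpRt)
        · exact mem_image_of_mem _ hcc
      exact ⟨key (fun x => x.1) continuous_fst (fun x hx => hx.1),
        key (fun x => x.2.1) (continuous_fst.comp continuous_snd) (fun x hx => hx.2.1),
        key (fun x => x.2.2) (continuous_snd.comp continuous_snd) (fun x hx => hx.2.2.1)⟩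
    · rintro ⟨hs1, hs2, hs3⟩
      obtain ⟨γ₁, hγ₁⟩ := joined_of_sign hn0 hp1 hq1 hs1
      obtain ⟨γ₂, hγ₂⟩ := joined_of_sign hn0 hp2 hq2 hs2
      have hγ₁u : ∀ t, IsUnit (γ₁ t) := hγ₁
      have hγ₂u : ∀ t, IsUnit (γ₂ t) := hγ₂
      set Sp : M := p.2.2 * p.2.1ᵀ⁻¹ * p.1 with hSp
      set Sq : M := q.2.2 * q.2.1ᵀ⁻¹ * q.1 with hSq
      set f3 : unitInterval → M := fun t =>
        ((1 - t.1) • Sp + t.1 • Sq) * (γ₁ t)⁻¹ * (γ₂ t)ᵀ with hf3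
      have hσD : ∀ t : unitInterval, ((1 - t.1) • Sp + t.1 • Sq).PosDef := fun t =>
        posDef_segment hpD hqD t.2.1 t.2.2
      have hcont3 : Continuous f3 := by
        apply Continuous.matrix_mul
        apply Continuous.matrix_mul
        · exact ((continuous_const.sub continuous_subtype_val).smul continuous_const).add
            (continuous_subtype_val.smul continuous_const)
        · exact continuous_inv_path γ₁ hγ₁u
        · exact γ₂.continuous.matrix_transpose
      have hsimp : ∀ t : unitInterval,
          f3 t * (γ₂ t)ᵀ⁻¹ * γ₁ t = (1 - t.1) • Sp + t.1 • Sq := by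
        intro t
        have e1 : (γ₂ t)ᵀ * (γ₂ t)ᵀ⁻¹ = 1 :=
          Matrix.mul_nonsing_inv _ (by rw [Matrix.det_transpose]
                                       exact (Matrix.isUnit_iff_isUnit_det _).mp (hγ₂u t))
        have e2 : (γ₁ t)⁻¹ * γ₁ t = 1 :=
          Matrix.nonsing_inv_mul _ ((Matrix.isUnit_iff_isUnit_det _).mp (hγ₁u t))
        show ((1 - t.1) • Sp + t.1 • Sq) * (γ₁ t)⁻¹ * (γ₂ t)ᵀ * (γ₂ t)ᵀ⁻¹ * γ₁ t
            = (1 - t.1) • Sp + t.1 • Sq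
        rw [mul_assoc (((1 - t.1) • Sp + t.1 • Sq) * (γ₁ t)⁻¹), e1, mul_one,
          mul_assoc, e2, mul_one]
      have hmem : ∀ t : unitInterval, (γ₁ t, γ₂ t, f3 t) ∈ Rt := by
        intro t
        refine ⟨hγ₁u t, hγ₂u t, ?_, ?_⟩
        · exact (((hσD t).isUnit.mul (isUnit_inv (hγ₁u t))).mul (isUnit_transpose (hγ₂u t)))
        · show (f3 t * (γ₂ t)ᵀ⁻¹ * γ₁ t).PosDef
          rw [hsimp t]
          exact hσD t
      have hend0 : f3 0 = p.2.2 := by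
        show ((1 - ((0 : unitInterval) : ℝ)) • Sp + ((0 : unitInterval) : ℝ) • Sq)
            * (γ₁ 0)⁻¹ * (γ₂ 0)ᵀ = p.2.2
        rw [Set.Icc.coe_zero, zero_smul, sub_zero, one_smul, add_zero, γ₁.source, γ₂.source,
          hSp, mul_assoc (p.2.2 * p.2.1ᵀ⁻¹) p.1 p.1⁻¹,
          Matrix.mul_nonsing_inv _ ((Matrix.isUnit_iff_isUnit_det _).mp hp1), mul_one,
          mul_assoc, Matrix.nonsing_inv_mul _
            (by rw [Matrix.det_transpose]; exact (Matrix.isUnit_iff_isUnit_det _).mp hp2),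
          mul_one]
      have hend1 : f3 1 = q.2.2 := by
        show ((1 - ((1 : unitInterval) : ℝ)) • Sp + ((1 : unitInterval) : ℝ) • Sq)
            * (γ₁ 1)⁻¹ * (γ₂ 1)ᵀ = q.2.2
        rw [Set.Icc.coe_one, sub_self, zero_smul, one_smul, zero_add, γ₁.target, γ₂.target,
          hSq, mul_assoc (q.2.2 * q.2.1ᵀ⁻¹) q.1 q.1⁻¹,
          Matrix.mul_nonsing_inv _ ((Matrix.isUnit_iff_isUnit_det _).mp hq1), mul_one,
          mul_assoc, Matrix.nonsing_inv_mul _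
            (by rw [Matrix.det_transpose]; exact (Matrix.isUnit_iff_isUnit_det _).mp hq2),
          mul_one]
      have hJ : JoinedIn Rt p q := by
        refine ⟨⟨⟨fun t => (γ₁ t, γ₂ t, f3 t),
          γ₁.continuous.prodMk (γ₂.continuous.prodMk hcont3)⟩, ?_, ?_⟩, fun t => hmem t⟩
        · show (γ₁ 0, γ₂ 0, f3 0) = p
          rw [γ₁.source, γ₂.source, hend0]
        · show (γ₁ 1, γ₂ 1, f3 1) = q
          rw [γ₁.target, γ₂.target, hend1]
      exact Stmt16.JoinedIn.mem_cc hJ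
  · intro b₁ b₂
    set db : Bool → Fin n → ℝ :=
      fun b k => if b then 1 else if k = (⟨0, hn0⟩ : Fin n) then -1 else 1 with hdb
    have hdbne : ∀ b k, db b k ≠ 0 := by
      intro b k; rcases b <;> simp only [db, if_true, if_false, Bool.false_eq_true] <;>
        first | (split_ifs <;> norm_num) | norm_num
    have hsq : ∀ b, (fun k => db b k * db b k) = fun _ => (1:ℝ) := by
      intro b; funext k; rcases b <;> simp only [db, if_true, if_false, Bool.false_eq_true] <;>
        first | (split_ifs <;> norm_num) | norm_num
    have hdet : ∀ b, (diagonal (db b)).det = if b then 1 else -1 := by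
      intro b
      rcases b
      · rw [Matrix.det_diagonal,
          Finset.prod_eq_single (⟨0, hn0⟩ : Fin n) (fun c _ hc => by simp [db, hc]) (by simp)]
        simp [db]
      · simp [db, Matrix.det_diagonal]
    refine ⟨(diagonal (db b₁), diagonal (db b₂), diagonal fun k => db b₂ k * db b₁ k),
      ⟨isUnit_diag (hdbne b₁), isUnit_diag (hdbne b₂),
        isUnit_diag (fun k => mul_ne_zero (hdbne b₂ k) (hdbne b₁ k)), ?_⟩, ?_, ?_⟩
    · show ((diagonal fun k => db b₂ k * db b₁ k) * (diagonal (db b₂))ᵀ⁻¹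
          * diagonal (db b₁)).PosDef
      rw [Matrix.diagonal_transpose]
      have hinv : (diagonal (db b₂))⁻¹ = diagonal (db b₂) :=
        Matrix.inv_eq_right_inv (by rw [Matrix.diagonal_mul_diagonal]
                                    show diagonal (fun k => db b₂ k * db b₂ k) = 1
                                    rw [show (fun k => db b₂ k * db b₂ k) = fun _ => (1:ℝ) from hsq b₂]
                                    exact Matrix.diagonal_one)
      rw [hinv, Matrix.diagonal_mul_diagonal, Matrix.diagonal_mul_diagonal]
      have hone : (fun k => (fun k => db b₂ k * db b₁ k) k * db b₂ k * db b₁ k) = fun _ => (1:ℝ) := by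
        funext k
        rcases b₁ <;> rcases b₂ <;>
          simp only [db, if_true, if_false, Bool.false_eq_true] <;>
            first | (split_ifs <;> norm_num) | norm_num
      rw [show (fun k => (fun k => db b₂ k * db b₁ k) k * db b₂ k * db b₁ k) = fun _ => (1:ℝ) from hone,
        Matrix.diagonal_one]
      exact Matrix.PosDef.one
    · show 0 < (diagonal (db b₁)).det ↔ b₁ = true
      rw [hdet b₁]; rcases b₁ <;> norm_num
    · show 0 < (diagonal (db b₂)).det ↔ b₂ = true
      rw [hdet b₂]; rcases b₂ <;> norm_num
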